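/- Let n, k, r be integers with k, r ≥ 2 and n ≥ k + r, and let H be a vertex-k-maximal r-uniform hypergraph on n vertices with separation triple (S, H_1, H_2), where n_i = |V(H_i)| for i = 1, 2. Then the number of edges of H intersecting each of V(H_1) − S, S, and V(H_2) − S equals C(n, r) − C(n_1, r) − C(n_2, r) + C(k, r) − C(n − k, r) + C(n_1 − k, r) + C(n_2 − k, r), where C(a, b) denotes the binomial coefficient (equal to 0 when b > a). -/

import Mathlib

/-- A finite hypergraph: a finite vertex set together with a finite set of
non-empty edges, each a subset of the vertex set. -/
structure FinHypergraph where
  verts : Finset ℕ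
  edges : Finset (Finset ℕ)
  edge_sub : ∀ e ∈ edges, e ⊆ verts
  edge_nonempty : ∀ e ∈ edges, e.Nonempty

namespace FinHypergraph

/-- `H` is `r`-uniform if every edge has cardinality `r`. -/
def IsUniform (H : FinHypergraph) (r : ℕ) : Prop := ∀ e ∈ H.edges, e.card = r

/-- `H'` is a subhypergraph of `H`. -/
def IsSub (H' H : FinHypergraph) : Prop := H'.verts ⊆ H.verts ∧ H'.edges ⊆ H.edges

/-- Two vertices are adjacent if some edge contains both. -/
def Adj (H : FinHypergraph) (u v : ℕ) : Prop := ∃ e ∈ H.edges, u ∈ e ∧ v ∈ e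

/-- `H` is connected if every pair of vertices is joined by a path
(equivalently, a walk, i.e. is reachable via the adjacency relation). -/
def Connected (H : FinHypergraph) : Prop :=
  ∀ u ∈ H.verts, ∀ v ∈ H.verts, Relation.ReflTransGen H.Adj u v

/-- The subhypergraph of `H` induced by the vertex set `Y`. -/
def induce (H : FinHypergraph) (Y : Finset ℕ) : FinHypergraph where
  verts := H.verts ∩ Y
  edges := H.edges.filter (fun e => e ⊆ Y)
  edge_sub := by
    intro e he
    simp only [Finset.mem_filter] at he
    exact Finset.subset_inter (H.edge_sub e he.1) he.2
  edge_nonempty := by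
    intro e he
    simp only [Finset.mem_filter] at he
    exact H.edge_nonempty e he.1

/-- `X` is a vertex-cut of `H` if deleting `X` leaves a disconnected hypergraph. -/
def IsVertexCut (H : FinHypergraph) (X : Finset ℕ) : Prop :=
  X ⊆ H.verts ∧ ¬ (H.induce (H.verts \ X)).Connected

open Classical in
/-- The vertex-connectivity of `H`: the minimum cardinality of a vertex-cut if one
exists, and `|V(H)| - 1` otherwise. -/
noncomputable def kappa (H : FinHypergraph) : ℕ :=
  if ∃ X, H.IsVertexCut X then sInf {m | ∃ X, H.IsVertexCut X ∧ X.card = m}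
  else H.verts.card - 1

/-- `κ̄(H)`: the maximum vertex-connectivity over all subhypergraphs of `H`. -/
noncomputable def kappaBar (H : FinHypergraph) : ℕ :=
  sSup {m | ∃ H' : FinHypergraph, H'.IsSub H ∧ H'.kappa = m}

/-- `H + e`: add the edge `e` (a non-empty subset of the vertices) to `H`. -/
def addEdge (H : FinHypergraph) (e : Finset ℕ) : FinHypergraph where
  verts := H.verts
  edges := if e ⊆ H.verts ∧ e.Nonempty then insert e H.edges else H.edges
  edge_sub := by
    intro f hf
    split at hf
    · rcases Finset.mem_insert.mp hf with rfl | hf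
      · exact (by assumption : f ⊆ H.verts ∧ f.Nonempty).1
      · exact H.edge_sub f hf
    · exact H.edge_sub f hf
  edge_nonempty := by
    intro f hf
    split at hf
    · rcases Finset.mem_insert.mp hf with rfl | hf
      · exact (by assumption : f ⊆ H.verts ∧ f.Nonempty).2
      · exact H.edge_nonempty f hf
    · exact H.edge_nonempty f hf

/-- `H + F`: add a set `F` of edges to `H`. -/
def addEdges (H : FinHypergraph) (F : Finset (Finset ℕ)) : FinHypergraph where
  verts := H.verts
  edges := H.edges ∪ F.filter (fun e => e ⊆ H.verts ∧ e.Nonempty)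
  edge_sub := by
    intro f hf
    rcases Finset.mem_union.mp hf with hf | hf
    · exact H.edge_sub f hf
    · exact (Finset.mem_filter.mp hf).2.1
  edge_nonempty := by
    intro f hf
    rcases Finset.mem_union.mp hf with hf | hf
    · exact H.edge_nonempty f hf
    · exact (Finset.mem_filter.mp hf).2.2

/-- `H` is vertex-`k`-maximal (as an `r`-uniform hypergraph): `κ̄(H) ≤ k`, but adding
any edge of the complement `H^c` creates a subhypergraph of connectivity at least `k + 1`. -/
def VertexKMaximal (H : FinHypergraph) (r k : ℕ) : Prop :=
  H.IsUniform r ∧ H.kappaBar ≤ k ∧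
    ∀ e : Finset ℕ, e ⊆ H.verts → e.card = r → e ∉ H.edges →
      k + 1 ≤ (H.addEdge e).kappaBar

/-- The complete `r`-uniform hypergraph on the vertex set `V`. -/
def completeHG (V : Finset ℕ) (r : ℕ) : FinHypergraph where
  verts := V
  edges := (V.powersetCard r).filter (fun e => e.Nonempty)
  edge_sub := by
    intro e he
    simp only [Finset.mem_filter, Finset.mem_powersetCard] at he
    exact he.1.1
  edge_nonempty := by
    intro e he
    exact (Finset.mem_filter.mp he).2

/-- The hypergraph on vertex set `V` with no edges. -/
def emptyHG (V : Finset ℕ) : FinHypergraph where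
  verts := V
  edges := ∅
  edge_sub := by simp
  edge_nonempty := by simp

/-- The `r`-join `H₁ ∨_r H₂`: the union of `H₁` and `H₂` together with all
`r`-element subsets of `V(H₁) ∪ V(H₂)` meeting both `V(H₁)` and `V(H₂)`. -/
def rJoin (H1 H2 : FinHypergraph) (r : ℕ) : FinHypergraph where
  verts := H1.verts ∪ H2.verts
  edges := H1.edges ∪ H2.edges ∪
    ((H1.verts ∪ H2.verts).powersetCard r).filter
      (fun e => (e ∩ H1.verts).Nonempty ∧ (e ∩ H2.verts).Nonempty)
  edge_sub := by
    intro e he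
    rcases Finset.mem_union.mp he with he | he
    · rcases Finset.mem_union.mp he with he | he
      · exact (H1.edge_sub e he).trans Finset.subset_union_left
      · exact (H2.edge_sub e he).trans Finset.subset_union_right
    · exact (Finset.mem_powersetCard.mp (Finset.mem_filter.mp he).1).1
  edge_nonempty := by
    intro e he
    rcases Finset.mem_union.mp he with he | he
    · rcases Finset.mem_union.mp he with he | he
      · exact H1.edge_nonempty e he
      · exact H2.edge_nonempty e he
    · obtain ⟨x, hx⟩ := (Finset.mem_filter.mp he).2.1
      exact ⟨x, (Finset.mem_inter.mp hx).1⟩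

/-- The union of two hypergraphs. -/
def hUnion (H1 H2 : FinHypergraph) : FinHypergraph where
  verts := H1.verts ∪ H2.verts
  edges := H1.edges ∪ H2.edges
  edge_sub := by
    intro e he
    rcases Finset.mem_union.mp he with he | he
    · exact (H1.edge_sub e he).trans Finset.subset_union_left
    · exact (H2.edge_sub e he).trans Finset.subset_union_right
  edge_nonempty := by
    intro e he
    rcases Finset.mem_union.mp he with he | he
    · exact H1.edge_nonempty e he
    · exact H2.edge_nonempty e he

/-- The union of the hypergraphs `f 0, …, f (m-1)`. -/
def unionOver (m : ℕ) (f : ℕ → FinHypergraph) : FinHypergraph where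
  verts := (Finset.range m).biUnion (fun i => (f i).verts)
  edges := (Finset.range m).biUnion (fun i => (f i).edges)
  edge_sub := by
    intro e he
    obtain ⟨i, hi, hei⟩ := Finset.mem_biUnion.mp he
    exact ((f i).edge_sub e hei).trans (Finset.subset_biUnion_of_mem (fun i => (f i).verts) hi)
  edge_nonempty := by
    intro e he
    obtain ⟨i, _, hei⟩ := Finset.mem_biUnion.mp he
    exact (f i).edge_nonempty e hei

/-- `C` is a component of `G`: a maximal connected subhypergraph. -/
def IsComponent (G C : FinHypergraph) : Prop :=
  C.IsSub G ∧ C.Connected ∧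
    ∀ C' : FinHypergraph, C'.IsSub G → C'.Connected → C.IsSub C' → C' = C

/-- `(S, H₁, H₂)` is a separation triple of `H`: `S` is a minimum vertex-cut,
`H₁ = H[S ∪ V(C₁)]` and `H₂ = H[S ∪ V(C₂)]`, where `C₁` is a component of `H - S`
and `C₂ = H - (S ∪ V(C₁))`. -/
def IsSeparationTriple (H : FinHypergraph) (S : Finset ℕ) (H1 H2 : FinHypergraph) : Prop :=
  H.IsVertexCut S ∧ (∀ X : Finset ℕ, H.IsVertexCut X → S.card ≤ X.card) ∧
    ∃ C1 : FinHypergraph, IsComponent (H.induce (H.verts \ S)) C1 ∧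
      H1 = H.induce (S ∪ C1.verts) ∧
      H2 = H.induce (S ∪ (H.verts \ (S ∪ C1.verts)))

end FinHypergraph

namespace FinHypergraph

open Finset

lemma kappa_le_card_sub_one (K : FinHypergraph) : K.kappa ≤ K.verts.card - 1 := by
  classical
  unfold kappa
  split
  · next h =>
    have hmem : sInf {m | ∃ X, K.IsVertexCut X ∧ X.card = m} ∈
        {m | ∃ X, K.IsVertexCut X ∧ X.card = m} := by
      apply Nat.sInf_mem
      obtain ⟨X, hX⟩ := h
      exact ⟨X.card, X, hX, rfl⟩
    obtain ⟨X, hX, hXc⟩ := hmem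
    have hncon := hX.2
    unfold Connected at hncon
    push_neg at hncon
    obtain ⟨u, hu, v, hv, huv⟩ := hncon
    have huv' : u ≠ v := by rintro rfl; exact huv Relation.ReflTransGen.refl
    have hu' : u ∈ K.verts \ X := (Finset.mem_inter.mp hu).2
    have hv' : v ∈ K.verts \ X := (Finset.mem_inter.mp hv).2
    have h2 : 1 < (K.verts \ X).card := Finset.one_lt_card.mpr ⟨u, hu', v, hv', huv'⟩
    have h3 : (K.verts \ X).card + X.card = K.verts.card :=
      Finset.card_sdiff_add_card_eq_card hX.1
    omega
  · exact le_refl _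

lemma kappa_le_card (K : FinHypergraph) : K.kappa ≤ K.verts.card :=
  le_trans (kappa_le_card_sub_one K) (Nat.sub_le _ _)

lemma kappa_le_of_cut (K : FinHypergraph) (X : Finset ℕ) (h : K.IsVertexCut X) :
    K.kappa ≤ X.card := by
  classical
  unfold kappa
  rw [if_pos ⟨X, h⟩]
  exact Nat.sInf_le ⟨X, h, rfl⟩

lemma bddAbove_kappaSet (G : FinHypergraph) :
    BddAbove {m | ∃ H' : FinHypergraph, H'.IsSub G ∧ H'.kappa = m} := by
  refine ⟨G.verts.card, ?_⟩
  rintro m ⟨H', hsub, rfl⟩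
  exact le_trans (kappa_le_card H') (Finset.card_le_card hsub.1)

lemma kappa_le_kappaBar_of_sub (G H' : FinHypergraph) (h : H'.IsSub G) :
    H'.kappa ≤ G.kappaBar :=
  le_csSup (bddAbove_kappaSet G) ⟨H', h, rfl⟩

lemma exists_high_sub (G : FinHypergraph) (k : ℕ) (h : k + 1 ≤ G.kappaBar) :
    ∃ H' : FinHypergraph, H'.IsSub G ∧ k + 1 ≤ H'.kappa := by
  have hne : {m | ∃ H' : FinHypergraph, H'.IsSub G ∧ H'.kappa = m}.Nonempty :=
    ⟨G.kappa, G, ⟨Finset.Subset.refl _, Finset.Subset.refl _⟩, rfl⟩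
  have hmem := Nat.sSup_mem hne (bddAbove_kappaSet G)
  obtain ⟨H', hsub, hk⟩ := hmem
  unfold kappaBar at h
  exact ⟨H', hsub, hk ▸ h⟩

lemma mem_of_mem_addEdge {H : FinHypergraph} {e f : Finset ℕ}
    (h : f ∈ (H.addEdge e).edges) (hne : f ≠ e) : f ∈ H.edges := by
  have h' : f ∈ (if e ⊆ H.verts ∧ e.Nonempty then insert e H.edges else H.edges) := h
  split at h'
  · rcases Finset.mem_insert.mp h' with rfl | h''
    · exact absurd rfl hne
    · exact h''
  · exact h'

lemma exists_high_sub_with_edge (H : FinHypergraph) (k : ℕ) (e : Finset ℕ)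
    (he : k + 1 ≤ (H.addEdge e).kappaBar) (hbar : H.kappaBar ≤ k) :
    ∃ H' : FinHypergraph, H'.IsSub (H.addEdge e) ∧ k + 1 ≤ H'.kappa ∧ e ∈ H'.edges := by
  obtain ⟨H', hsub, hk⟩ := exists_high_sub _ k he
  by_cases hmem : e ∈ H'.edges
  · exact ⟨H', hsub, hk, hmem⟩
  · exfalso
    have hsubH : H'.IsSub H := by
      refine ⟨hsub.1, ?_⟩
      intro f hf
      exact mem_of_mem_addEdge (hsub.2 hf) (by rintro rfl; exact hmem hf)
    have := kappa_le_kappaBar_of_sub H H' hsubH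
    omega

lemma not_connected_of_sep (K : FinHypergraph) (Z P Q : Finset ℕ)
    (hPQ : ∀ x, x ∈ P → x ∈ Q → False)
    (hedge : ∀ f ∈ K.edges, f ⊆ K.verts \ Z → f ⊆ P ∨ f ⊆ Q)
    (p q : ℕ) (hp : p ∈ K.verts \ Z) (hpP : p ∈ P)
    (hq : q ∈ K.verts \ Z) (hqQ : q ∈ Q) :
    ¬ (K.induce (K.verts \ Z)).Connected := by
  intro hcon
  have hp' : p ∈ (K.induce (K.verts \ Z)).verts :=
    Finset.mem_inter.mpr ⟨(Finset.mem_sdiff.mp hp).1, hp⟩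
  have hq' : q ∈ (K.induce (K.verts \ Z)).verts :=
    Finset.mem_inter.mpr ⟨(Finset.mem_sdiff.mp hq).1, hq⟩
  have hreach := hcon p hp' q hq'
  have key : ∀ x, Relation.ReflTransGen (K.induce (K.verts \ Z)).Adj p x → x ∈ P := by
    intro x hx
    induction hx with
    | refl => exact hpP
    | tail hab hbc ih =>
      obtain ⟨f, hf, hb, hc⟩ := hbc
      have hf' : f ∈ K.edges ∧ f ⊆ K.verts \ Z := Finset.mem_filter.mp hf
      rcases hedge f hf'.1 hf'.2 with hfP | hfQ
      · exact hfP hc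
      · exact absurd (hfQ hb) (fun h => hPQ _ ih h)
  exact hPQ q (key q hreach) hqQ

lemma edge_subset_component (H : FinHypergraph) (S : Finset ℕ) (C1 : FinHypergraph)
    (hC1 : IsComponent (H.induce (H.verts \ S)) C1)
    (f : Finset ℕ) (hf : f ∈ H.edges) (hfS : f ⊆ H.verts \ S)
    (hfP : (f ∩ C1.verts).Nonempty) : f ⊆ C1.verts := by
  classical
  have hfG : f ∈ (H.induce (H.verts \ S)).edges := Finset.mem_filter.mpr ⟨hf, hfS⟩
  obtain ⟨w, hw⟩ := hfP
  have hwf : w ∈ f := (Finset.mem_inter.mp hw).1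
  have hwC : w ∈ C1.verts := (Finset.mem_inter.mp hw).2
  let C' : FinHypergraph :=
    { verts := C1.verts ∪ f
      edges := insert f C1.edges
      edge_sub := by
        intro e he
        rcases Finset.mem_insert.mp he with rfl | he
        · exact Finset.subset_union_right
        · exact (C1.edge_sub e he).trans Finset.subset_union_left
      edge_nonempty := by
        intro e he
        rcases Finset.mem_insert.mp he with rfl | he
        · exact ⟨w, hwf⟩
        · exact C1.edge_nonempty e he }
  have hsubG : C'.IsSub (H.induce (H.verts \ S)) := by
    constructor
    · apply Finset.union_subset hC1.1.1
      intro x hx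
      exact Finset.mem_inter.mpr ⟨(Finset.mem_sdiff.mp (hfS hx)).1, hfS hx⟩
    · intro e he
      rcases Finset.mem_insert.mp he with rfl | he
      · exact hfG
      · exact hC1.1.2 he
  have hadjmono : ∀ u v, C1.Adj u v → C'.Adj u v := by
    rintro u v ⟨e, he, hu, hv⟩
    exact ⟨e, Finset.mem_insert_of_mem he, hu, hv⟩
  have hreachC1 : ∀ u ∈ C1.verts, ∀ v ∈ C1.verts, Relation.ReflTransGen C'.Adj u v := by
    intro u hu v hv
    exact Relation.ReflTransGen.mono hadjmono _ _ (hC1.2.1 u hu v hv)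
  have hstep : ∀ x ∈ f, ∀ y ∈ f, Relation.ReflTransGen C'.Adj x y := by
    intro x hx y hy
    exact Relation.ReflTransGen.single ⟨f, Finset.mem_insert_self _ _, hx, hy⟩
  have hconn : C'.Connected := by
    intro u hu v hv
    rcases Finset.mem_union.mp hu with hu1 | huf <;> rcases Finset.mem_union.mp hv with hv1 | hvf
    · exact hreachC1 u hu1 v hv1
    · exact (hreachC1 u hu1 w hwC).trans (hstep w hwf v hvf)
    · exact (hstep u huf w hwf).trans (hreachC1 w hwC v hv1)
    · exact hstep u huf v hvf
  have heq : C' = C1 :=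
    hC1.2.2 C' hsubG hconn ⟨Finset.subset_union_left, Finset.subset_insert _ _⟩
  have hv : C1.verts ∪ f = C1.verts := congrArg FinHypergraph.verts heq
  intro x hx
  rw [← hv]
  exact Finset.mem_union_right _ hx

end FinHypergraph

open Finset in
lemma count_crossing (V S P Q : Finset ℕ) (r : ℕ) (hr : 1 ≤ r)
    (hSP : ∀ x, x ∈ S → x ∈ P → False)
    (hSQ : ∀ x, x ∈ S → x ∈ Q → False)
    (hPQ : ∀ x, x ∈ P → x ∈ Q → False)
    (hV : ∀ x, x ∈ V ↔ x ∈ S ∨ x ∈ P ∨ x ∈ Q) :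
    (((V.powersetCard r).filter
        (fun e => (e ∩ P).Nonempty ∧ (e ∩ S).Nonempty ∧ (e ∩ Q).Nonempty)).card : ℤ)
      = (V.card.choose r : ℤ) - ((S ∪ P).card.choose r : ℤ) - ((S ∪ Q).card.choose r : ℤ)
        - ((P ∪ Q).card.choose r : ℤ)
        + (S.card.choose r : ℤ) + (P.card.choose r : ℤ) + (Q.card.choose r : ℤ) := by
  classical
  set T := V.powersetCard r with hT
  have hSPV : S ∪ P ⊆ V := by intro x hx; rw [hV]; rcases Finset.mem_union.mp hx with h|h
                              · exact Or.inl h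
                              · exact Or.inr (Or.inl h)
  have hSQV : S ∪ Q ⊆ V := by intro x hx; rw [hV]; rcases Finset.mem_union.mp hx with h|h
                              · exact Or.inl h
                              · exact Or.inr (Or.inr h)
  have hPQV : P ∪ Q ⊆ V := by intro x hx; rw [hV]; rcases Finset.mem_union.mp hx with h|h
                              · exact Or.inr (Or.inl h)
                              · exact Or.inr (Or.inr h)
  -- filter by subsets
  have hsub : ∀ X : Finset ℕ, X ⊆ V →
      (T.filter (fun e => e ⊆ X)).card = X.card.choose r := by
    intro X hX
    rw [← Finset.card_powersetCard]
    congr 1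
    ext e
    simp only [Finset.mem_filter, Finset.mem_powersetCard, hT]
    exact ⟨fun ⟨⟨_, h2⟩, h3⟩ => ⟨h3, h2⟩, fun ⟨h1, h2⟩ => ⟨⟨h1.trans hX, h2⟩, h1⟩⟩
  -- rewrite the crossing condition
  have hkey : T.filter (fun e => (e ∩ P).Nonempty ∧ (e ∩ S).Nonempty ∧ (e ∩ Q).Nonempty)
      = T.filter (fun e => ¬(e ⊆ S ∪ Q ∨ e ⊆ S ∪ P ∨ e ⊆ P ∪ Q)) := by
    apply Finset.filter_congr
    intro e he
    have heV : e ⊆ V := (Finset.mem_powersetCard.mp he).1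
    have h1 : (e ∩ P).Nonempty ↔ ¬ e ⊆ S ∪ Q := by
      constructor
      · rintro ⟨x, hx⟩ hsub'
        obtain ⟨hxe, hxP⟩ := Finset.mem_inter.mp hx
        rcases Finset.mem_union.mp (hsub' hxe) with h|h
        · exact hSP x h hxP
        · exact hPQ x hxP h
      · intro h
        by_contra hne
        apply h
        intro x hx
        rcases (hV x).mp (heV hx) with h'|h'|h'
        · exact Finset.mem_union_left _ h'
        · exact absurd ⟨x, Finset.mem_inter.mpr ⟨hx, h'⟩⟩ hne
        · exact Finset.mem_union_right _ h'
    have h2 : (e ∩ S).Nonempty ↔ ¬ e ⊆ P ∪ Q := by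
      constructor
      · rintro ⟨x, hx⟩ hsub'
        obtain ⟨hxe, hxS⟩ := Finset.mem_inter.mp hx
        rcases Finset.mem_union.mp (hsub' hxe) with h|h
        · exact hSP x hxS h
        · exact hSQ x hxS h
      · intro h
        by_contra hne
        apply h
        intro x hx
        rcases (hV x).mp (heV hx) with h'|h'|h'
        · exact absurd ⟨x, Finset.mem_inter.mpr ⟨hx, h'⟩⟩ hne
        · exact Finset.mem_union_left _ h'
        · exact Finset.mem_union_right _ h'
    have h3 : (e ∩ Q).Nonempty ↔ ¬ e ⊆ S ∪ P := by
      constructor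
      · rintro ⟨x, hx⟩ hsub'
        obtain ⟨hxe, hxQ⟩ := Finset.mem_inter.mp hx
        rcases Finset.mem_union.mp (hsub' hxe) with h|h
        · exact hSQ x h hxQ
        · exact hPQ x h hxQ
      · intro h
        by_contra hne
        apply h
        intro x hx
        rcases (hV x).mp (heV hx) with h'|h'|h'
        · exact Finset.mem_union_left _ h'
        · exact Finset.mem_union_right _ h'
        · exact absurd ⟨x, Finset.mem_inter.mpr ⟨hx, h'⟩⟩ hne
    rw [h1, h2, h3]
    tauto
  set A := T.filter (fun e => e ⊆ S ∪ Q) with hA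
  set B := T.filter (fun e => e ⊆ S ∪ P) with hB
  set Cc := T.filter (fun e => e ⊆ P ∪ Q) with hCc
  have hunion : T.filter (fun e => e ⊆ S ∪ Q ∨ e ⊆ S ∪ P ∨ e ⊆ P ∪ Q) = A ∪ (B ∪ Cc) := by
    rw [Finset.filter_or, Finset.filter_or]
  have hcompl : (T.filter (fun e => (e ∩ P).Nonempty ∧ (e ∩ S).Nonempty ∧ (e ∩ Q).Nonempty)).card
      + (A ∪ (B ∪ Cc)).card = T.card := by
    rw [hkey, ← hunion]
    have h := Finset.card_filter_add_card_filter_not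
      (s := T) (fun e => e ⊆ S ∪ Q ∨ e ⊆ S ∪ P ∨ e ⊆ P ∪ Q)
    omega
  -- intersections
  have hinter : ∀ (X Y : Finset ℕ),
      T.filter (fun e => e ⊆ X) ∩ T.filter (fun e => e ⊆ Y)
        = T.filter (fun e => e ⊆ X ∩ Y) := by
    intro X Y
    rw [← Finset.filter_and]
    apply Finset.filter_congr
    intro e _
    exact (Finset.subset_inter_iff).symm
  have hSQ_SP : (S ∪ Q) ∩ (S ∪ P) = S := by
    ext x
    simp only [Finset.mem_inter, Finset.mem_union]
    constructor
    · rintro ⟨h1|h1, h2|h2⟩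
      · exact h1
      · exact h1
      · exact h2
      · exact absurd h1 (fun h => hPQ x h2 h)
    · exact fun h => ⟨Or.inl h, Or.inl h⟩
  have hSQ_PQ : (S ∪ Q) ∩ (P ∪ Q) = Q := by
    ext x
    simp only [Finset.mem_inter, Finset.mem_union]
    constructor
    · rintro ⟨h1|h1, h2|h2⟩
      · exact absurd h2 (fun h => hSP x h1 h)
      · exact h2
      · exact h1
      · exact h1
    · exact fun h => ⟨Or.inr h, Or.inr h⟩
  have hSP_PQ : (S ∪ P) ∩ (P ∪ Q) = P := by
    ext x
    simp only [Finset.mem_inter, Finset.mem_union]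
    constructor
    · rintro ⟨h1|h1, h2|h2⟩
      · exact h2
      · exact absurd h2 (fun h => hSQ x h1 h)
      · exact h1
      · exact h1
    · exact fun h => ⟨Or.inr h, Or.inl h⟩
  have hScapPQ : S ∩ (P ∪ Q) = ∅ := by
    ext x
    simp only [Finset.mem_inter, Finset.mem_union, Finset.notMem_empty, iff_false]
    rintro ⟨h1, h2|h2⟩
    · exact hSP x h1 h2
    · exact hSQ x h1 h2
  -- cards
  have cA : A.card = (S ∪ Q).card.choose r := hsub _ hSQV
  have cB : B.card = (S ∪ P).card.choose r := hsub _ hSPV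
  have cC : Cc.card = (P ∪ Q).card.choose r := hsub _ hPQV
  have cAB : (A ∩ B).card = S.card.choose r := by
    rw [hA, hB, hinter, hSQ_SP, hsub S (fun x hx => (hV x).mpr (Or.inl hx))]
  have cAC : (A ∩ Cc).card = Q.card.choose r := by
    rw [hA, hCc, hinter, hSQ_PQ, hsub Q (fun x hx => (hV x).mpr (Or.inr (Or.inr hx)))]
  have cBC : (B ∩ Cc).card = P.card.choose r := by
    rw [hB, hCc, hinter, hSP_PQ, hsub P (fun x hx => (hV x).mpr (Or.inr (Or.inl hx)))]
  have cABC : (A ∩ B ∩ Cc).card = 0 := by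
    rw [hA, hB, hinter, hCc, hinter, hSQ_SP, hScapPQ]
    rw [Finset.card_eq_zero]
    apply Finset.filter_false_of_mem
    intro e he hsub'
    have h1 : e = ∅ := Finset.subset_empty.mp hsub'
    have h2 := (Finset.mem_powersetCard.mp he).2
    rw [h1] at h2
    simp at h2
    omega
  have cT : T.card = V.card.choose r := Finset.card_powersetCard _ _
  -- inclusion–exclusion bookkeeping
  have u1 : (A ∪ (B ∪ Cc)).card + (A ∩ (B ∪ Cc)).card = A.card + (B ∪ Cc).card :=
    Finset.card_union_add_card_inter _ _
  have u2 : (B ∪ Cc).card + (B ∩ Cc).card = B.card + Cc.card :=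
    Finset.card_union_add_card_inter _ _
  have u3 : A ∩ (B ∪ Cc) = (A ∩ B) ∪ (A ∩ Cc) := Finset.inter_union_distrib_left _ _ _
  have u4 : ((A ∩ B) ∪ (A ∩ Cc)).card + ((A ∩ B) ∩ (A ∩ Cc)).card
      = (A ∩ B).card + (A ∩ Cc).card := Finset.card_union_add_card_inter _ _
  have u5 : (A ∩ B) ∩ (A ∩ Cc) = A ∩ B ∩ Cc := by
    ext x
    simp only [Finset.mem_inter]
    tauto
  rw [u3] at u1
  rw [u5] at u4
  have := hcompl
  zify at this u1 u2 u4 cA cB cC cAB cAC cBC cABC cT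
  linarith

/-- With a separation triple `(S, H₁, H₂)` of a vertex-`k`-maximal
`r`-uniform hypergraph `H` on `n` vertices, where `nᵢ = |V(Hᵢ)|`, the number of
edges of `H` meeting all of `V(H₁) - S`, `S` and `V(H₂) - S` equals
`C(n,r) - C(n₁,r) - C(n₂,r) + C(k,r) - C(n-k,r) + C(n₁-k,r) + C(n₂-k,r)`. -/
theorem stmt_5 (n k r : ℕ) (hk : 2 ≤ k) (hr : 2 ≤ r) (hn : k + r ≤ n)
    (H : FinHypergraph) (hcard : H.verts.card = n) (hH : H.VertexKMaximal r k)
    (S : Finset ℕ) (H1 H2 : FinHypergraph) (hsep : H.IsSeparationTriple S H1 H2)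
    (n1 n2 : ℕ) (hn1 : H1.verts.card = n1) (hn2 : H2.verts.card = n2) :
    ((H.edges.filter (fun e => (e ∩ (H1.verts \ S)).Nonempty ∧ (e ∩ S).Nonempty ∧
        (e ∩ (H2.verts \ S)).Nonempty)).card : ℤ) =
      (n.choose r : ℤ) - (n1.choose r : ℤ) - (n2.choose r : ℤ) + (k.choose r : ℤ)
        - ((n - k).choose r : ℤ) + ((n1 - k).choose r : ℤ) + ((n2 - k).choose r : ℤ) := by
  classical
  obtain ⟨hcut, hmin, C1, hC1, hH1, hH2⟩ := hsep
  obtain ⟨hunif, hkbar, hmax⟩ := hH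
  set V := H.verts with hV
  set P := C1.verts with hP
  set Q := H.verts \ (S ∪ C1.verts) with hQ
  have hSV : S ⊆ V := hcut.1
  have hGverts : (H.induce (V \ S)).verts = V \ S :=
    Finset.inter_eq_right.mpr Finset.sdiff_subset
  have hPVS : P ⊆ V \ S := by
    have h := hC1.1.1
    rwa [hGverts] at h
  have hPnS : ∀ x ∈ P, x ∉ S := fun x hx => (Finset.mem_sdiff.mp (hPVS hx)).2
  have hPV : P ⊆ V := fun x hx => (Finset.mem_sdiff.mp (hPVS hx)).1
  have hQmem : ∀ x, x ∈ Q ↔ x ∈ V ∧ x ∉ S ∧ x ∉ P := by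
    intro x
    simp only [hQ, Finset.mem_sdiff, Finset.mem_union]
    tauto
  have hQV : Q ⊆ V := fun x hx => ((hQmem x).mp hx).1
  have hPQ : ∀ x, x ∈ P → x ∈ Q → False := fun x h1 h2 => ((hQmem x).mp h2).2.2 h1
  have hSQ : ∀ x, x ∈ S → x ∈ Q → False := fun x h1 h2 => ((hQmem x).mp h2).2.1 h1
  have hSP : ∀ x, x ∈ S → x ∈ P → False := fun x h1 h2 => hPnS x h2 h1
  have hcover : ∀ x ∈ V, x ∈ S ∨ x ∈ P ∨ x ∈ Q := by
    intro x hx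
    by_cases h1 : x ∈ S
    · exact Or.inl h1
    by_cases h2 : x ∈ P
    · exact Or.inr (Or.inl h2)
    · exact Or.inr (Or.inr ((hQmem x).mpr ⟨hx, h1, h2⟩))
  have hGncon : ¬ (H.induce (V \ S)).Connected := hcut.2
  -- edges avoiding S lie in P or Q
  have hPorQ : ∀ f ∈ H.edges, (∀ x ∈ f, x ∉ S) → f ⊆ P ∨ f ⊆ Q := by
    intro f hf hfS
    have hfV : f ⊆ V := H.edge_sub f hf
    have hfVS : f ⊆ V \ S := fun x hx => Finset.mem_sdiff.mpr ⟨hfV hx, hfS x hx⟩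
    by_cases hfp : (f ∩ P).Nonempty
    · exact Or.inl (FinHypergraph.edge_subset_component H S C1 hC1 f hf hfVS hfp)
    · refine Or.inr (fun x hx => ?_)
      rcases hcover x (hfV hx) with h|h|h
      · exact absurd h (hfS x hx)
      · exact absurd ⟨x, Finset.mem_inter.mpr ⟨hx, h⟩⟩ hfp
      · exact h
  -- P is nonempty
  have hPne : P.Nonempty := by
    by_contra hne
    rw [Finset.not_nonempty_iff_eq_empty] at hne
    have hncon := hGncon
    unfold FinHypergraph.Connected at hncon
    push_neg at hncon
    obtain ⟨u, hu, -, -, -⟩ := hncon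
    let Cu : FinHypergraph := ⟨{u}, ∅, by simp, by simp⟩
    have hCuSub : Cu.IsSub (H.induce (V \ S)) := by
      constructor
      · intro x hx
        rw [Finset.mem_singleton] at hx
        subst hx
        exact hu
      · exact Finset.empty_subset _
    have hCuConn : Cu.Connected := by
      intro x hx y hy
      rw [Finset.mem_singleton] at hx hy
      subst hx; subst hy
      exact Relation.ReflTransGen.refl
    have hC1e : C1.edges = ∅ := by
      rw [Finset.eq_empty_iff_forall_notMem]
      intro e he
      obtain ⟨x, hx⟩ := C1.edge_nonempty e he
      have := C1.edge_sub e he hx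
      rw [← hP, hne] at this
      exact Finset.notMem_empty x this
    have heq : Cu = C1 := hC1.2.2 Cu hCuSub hCuConn
      ⟨by rw [← hP, hne]; exact Finset.empty_subset _, by rw [hC1e]⟩
    have : C1.verts = {u} := (congrArg FinHypergraph.verts heq).symm
    rw [← hP, hne] at this
    exact Finset.singleton_ne_empty u this.symm
  -- Q is nonempty
  have hQne : Q.Nonempty := by
    by_contra hne
    rw [Finset.not_nonempty_iff_eq_empty] at hne
    apply hGncon
    intro u hu v hv
    rw [hGverts] at hu hv
    have hup : u ∈ P := by
      rcases hcover u (Finset.mem_sdiff.mp hu).1 with h|h|h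
      · exact absurd h (Finset.mem_sdiff.mp hu).2
      · exact h
      · rw [hne] at h; exact absurd h (Finset.notMem_empty u)
    have hvp : v ∈ P := by
      rcases hcover v (Finset.mem_sdiff.mp hv).1 with h|h|h
      · exact absurd h (Finset.mem_sdiff.mp hv).2
      · exact h
      · rw [hne] at h; exact absurd h (Finset.notMem_empty v)
    have hmono : ∀ a b, C1.Adj a b → (H.induce (V \ S)).Adj a b := by
      rintro a b ⟨e, he, ha, hb⟩
      exact ⟨e, hC1.1.2 he, ha, hb⟩
    exact Relation.ReflTransGen.mono hmono _ _ (hC1.2.1 u hup v hvp)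
  -- |S| ≤ k
  have hsk : S.card ≤ k := by
    have hex : ∃ X, H.IsVertexCut X := ⟨S, hcut⟩
    have h1 : H.kappa = sInf {m | ∃ X, H.IsVertexCut X ∧ X.card = m} := by
      unfold FinHypergraph.kappa
      rw [if_pos hex]
    have hmem : sInf {m | ∃ X, H.IsVertexCut X ∧ X.card = m} ∈
        {m | ∃ X, H.IsVertexCut X ∧ X.card = m} :=
      Nat.sInf_mem ⟨S.card, S, hcut, rfl⟩
    obtain ⟨X0, hX0, hX0c⟩ := hmem
    have h2 := hmin X0 hX0
    have h3 : H.kappa ≤ H.kappaBar :=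
      FinHypergraph.kappa_le_kappaBar_of_sub H H ⟨Finset.Subset.refl _, Finset.Subset.refl _⟩
    omega
  -- k ≤ |S|
  have hks : k ≤ S.card := by
    by_contra hlt
    push_neg at hlt
    obtain ⟨p, hpP⟩ := hPne
    obtain ⟨q, hqQ⟩ := hQne
    have hpq : p ≠ q := fun h => hPQ p hpP (h ▸ hqQ)
    have hPQVS : P ∪ Q = V \ S := by
      ext x
      constructor
      · intro hx
        rcases Finset.mem_union.mp hx with h|h
        · exact hPVS h
        · exact Finset.mem_sdiff.mpr ⟨hQV h, fun hs => hSQ x hs h⟩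
      · intro hx
        rcases hcover x (Finset.mem_sdiff.mp hx).1 with h|h|h
        · exact absurd h (Finset.mem_sdiff.mp hx).2
        · exact Finset.mem_union_left _ h
        · exact Finset.mem_union_right _ h
    have hpqsub : {p, q} ⊆ P ∪ Q := by
      intro x hx
      rcases Finset.mem_insert.mp hx with rfl|hx
      · exact Finset.mem_union_left _ hpP
      · rw [Finset.mem_singleton] at hx
        subst hx
        exact Finset.mem_union_right _ hqQ
    have hVScard : (V \ S).card + S.card = V.card := Finset.card_sdiff_add_card_eq_card hSV
    have hRcard : r - 2 ≤ ((P ∪ Q) \ {p, q}).card := by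
      have h1 : ((P ∪ Q) \ {p, q}).card + ({p, q} : Finset ℕ).card = (P ∪ Q).card :=
        Finset.card_sdiff_add_card_eq_card hpqsub
      have h2 : ({p, q} : Finset ℕ).card = 2 := Finset.card_pair hpq
      have h3 : (P ∪ Q).card = (V \ S).card := by rw [hPQVS]
      omega
    obtain ⟨t, htsub, htcard⟩ := Finset.exists_subset_card_eq hRcard
    have hpt : p ∉ t := fun h => (Finset.mem_sdiff.mp (htsub h)).2 (Finset.mem_insert_self _ _)
    have hqt : q ∉ t := fun h =>
      (Finset.mem_sdiff.mp (htsub h)).2 (Finset.mem_insert_of_mem (Finset.mem_singleton_self _))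
    set e := insert p (insert q t) with he
    have hecard : e.card = r := by
      rw [he, Finset.card_insert_of_notMem, Finset.card_insert_of_notMem hqt, htcard]
      · omega
      · intro h
        rcases Finset.mem_insert.mp h with h'|h'
        · exact hpq h'
        · exact hpt h'
    have hePQ : e ⊆ P ∪ Q := by
      intro x hx
      rcases Finset.mem_insert.mp hx with rfl|hx
      · exact Finset.mem_union_left _ hpP
      rcases Finset.mem_insert.mp hx with rfl|hx
      · exact Finset.mem_union_right _ hqQ
      · rcases Finset.mem_union.mp (Finset.mem_sdiff.mp (htsub hx)).1 with h|h
        · exact Finset.mem_union_left _ h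
        · exact Finset.mem_union_right _ h
    have heVS : e ⊆ V \ S := hePQ.trans (hPQVS ▸ Finset.Subset.refl _)
    have heV : e ⊆ V := fun x hx => (Finset.mem_sdiff.mp (heVS hx)).1
    have henS : ∀ x ∈ e, x ∉ S := fun x hx => (Finset.mem_sdiff.mp (heVS hx)).2
    have hnotedge : e ∉ H.edges := by
      intro hmem
      rcases hPorQ e hmem henS with h|h
      · exact hPQ q (h (Finset.mem_insert_of_mem (Finset.mem_insert_self _ _))) hqQ
      · exact hPQ p hpP (h (Finset.mem_insert_self _ _))
    obtain ⟨H', hsub, hk', heH'⟩ :=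
      FinHypergraph.exists_high_sub_with_edge H k e (hmax e heV hecard hnotedge) hkbar
    set W := H'.verts with hW
    have hWV : W ⊆ V := hsub.1
    have heW : e ⊆ W := H'.edge_sub e heH'
    have hedgeIn : ∀ x : ℕ, x ∈ e →
        ∀ f ∈ H'.edges, f ⊆ W \ ((S ∩ W) ∪ {x}) → f ⊆ P ∨ f ⊆ Q := by
      intro x hxe f hf hfsub
      have hfe : f ≠ e := by
        rintro rfl
        have h := hfsub hxe
        exact (Finset.mem_sdiff.mp h).2 (Finset.mem_union_right _ (Finset.mem_singleton_self _))
      apply hPorQ f (FinHypergraph.mem_of_mem_addEdge (hsub.2 hf) hfe)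
      intro y hy hyS
      have h := Finset.mem_sdiff.mp (hfsub hy)
      exact h.2 (Finset.mem_union_left _ (Finset.mem_inter.mpr ⟨hyS, h.1⟩))
    have hcutcard : ∀ x : ℕ, H'.IsVertexCut ((S ∩ W) ∪ {x}) → False := by
      intro x hc
      have h1 := FinHypergraph.kappa_le_of_cut H' _ hc
      have h2 : ((S ∩ W) ∪ {x}).card ≤ S.card + 1 := by
        calc ((S ∩ W) ∪ {x}).card ≤ (S ∩ W).card + ({x} : Finset ℕ).card :=
              Finset.card_union_le _ _
          _ ≤ S.card + 1 := by
              have h5 : (S ∩ W).card ≤ S.card := Finset.card_le_card Finset.inter_subset_left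
              simp only [Finset.card_singleton]
              omega
      omega
    have hWP : ∀ x ∈ W, x ∈ P → x = p := by
      intro x hxW hxP
      by_contra hxp
      apply hcutcard p
      have hx' : x ∈ H'.verts \ ((S ∩ W) ∪ {p}) := by
        refine Finset.mem_sdiff.mpr ⟨hxW, ?_⟩
        intro h
        rcases Finset.mem_union.mp h with h'|h'
        · exact hPnS x hxP (Finset.mem_inter.mp h').1
        · exact hxp (Finset.mem_singleton.mp h')
      have hq' : q ∈ H'.verts \ ((S ∩ W) ∪ {p}) := by
        refine Finset.mem_sdiff.mpr ⟨heW (Finset.mem_insert_of_mem (Finset.mem_insert_self _ _)), ?_⟩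
        intro h
        rcases Finset.mem_union.mp h with h'|h'
        · exact hSQ q (Finset.mem_inter.mp h').1 hqQ
        · exact hpq (Finset.mem_singleton.mp h').symm
      exact ⟨Finset.union_subset Finset.inter_subset_right
          (Finset.singleton_subset_iff.mpr (heW (Finset.mem_insert_self _ _))),
        FinHypergraph.not_connected_of_sep H' _ P Q hPQ
          (hedgeIn p (Finset.mem_insert_self _ _)) x q hx' hxP hq' hqQ⟩
    have hWQ : ∀ x ∈ W, x ∈ Q → x = q := by
      intro x hxW hxQ
      by_contra hxq
      apply hcutcard q
      have hp' : p ∈ H'.verts \ ((S ∩ W) ∪ {q}) := by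
        refine Finset.mem_sdiff.mpr ⟨heW (Finset.mem_insert_self _ _), ?_⟩
        intro h
        rcases Finset.mem_union.mp h with h'|h'
        · exact hPnS p hpP (Finset.mem_inter.mp h').1
        · exact hpq (Finset.mem_singleton.mp h')
      have hx' : x ∈ H'.verts \ ((S ∩ W) ∪ {q}) := by
        refine Finset.mem_sdiff.mpr ⟨hxW, ?_⟩
        intro h
        rcases Finset.mem_union.mp h with h'|h'
        · exact hSQ x (Finset.mem_inter.mp h').1 hxQ
        · exact hxq (Finset.mem_singleton.mp h')
      exact ⟨Finset.union_subset Finset.inter_subset_right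
          (Finset.singleton_subset_iff.mpr
            (heW (Finset.mem_insert_of_mem (Finset.mem_insert_self _ _)))),
        FinHypergraph.not_connected_of_sep H' _ P Q hPQ
          (hedgeIn q (Finset.mem_insert_of_mem (Finset.mem_insert_self _ _))) p x hp' hpP hx' hxQ⟩
    have hWsub : W ⊆ S ∪ {p, q} := by
      intro x hx
      rcases hcover x (hWV hx) with h|h|h
      · exact Finset.mem_union_left _ h
      · exact Finset.mem_union_right _ (by rw [hWP x hx h]; exact Finset.mem_insert_self _ _)
      · exact Finset.mem_union_right _
          (by rw [hWQ x hx h]; exact Finset.mem_insert_of_mem (Finset.mem_singleton_self _))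
    have hWcard : W.card ≤ S.card + 2 := by
      calc W.card ≤ (S ∪ {p, q}).card := Finset.card_le_card hWsub
        _ ≤ S.card + ({p, q} : Finset ℕ).card := Finset.card_union_le _ _
        _ ≤ S.card + 2 := by
            have := Finset.card_insert_le p ({q} : Finset ℕ)
            simp only [Finset.card_singleton] at this ⊢
            omega
    have hkc : H'.kappa ≤ W.card - 1 := FinHypergraph.kappa_le_card_sub_one H'
    omega
  -- every crossing r-subset is an edge
  have hcross : ∀ e : Finset ℕ, e ⊆ V → e.card = r →
      (e ∩ P).Nonempty → (e ∩ S).Nonempty → (e ∩ Q).Nonempty → e ∈ H.edges := by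
    intro e heV hecard hpne hsne hqne
    by_contra hnot
    obtain ⟨H', hsub, hk', heH'⟩ :=
      FinHypergraph.exists_high_sub_with_edge H k e (hmax e heV hecard hnot) hkbar
    set W := H'.verts with hW
    have hWV : W ⊆ V := hsub.1
    have heW : e ⊆ W := H'.edge_sub e heH'
    obtain ⟨p, hp⟩ := hpne
    obtain ⟨q, hq⟩ := hqne
    obtain ⟨z, hz⟩ := hsne
    have hpe : p ∈ e := (Finset.mem_inter.mp hp).1
    have hpP : p ∈ P := (Finset.mem_inter.mp hp).2
    have hqe : q ∈ e := (Finset.mem_inter.mp hq).1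
    have hqQ : q ∈ Q := (Finset.mem_inter.mp hq).2
    have hze : z ∈ e := (Finset.mem_inter.mp hz).1
    have hzS : z ∈ S := (Finset.mem_inter.mp hz).2
    have hcutZ : H'.IsVertexCut (S ∩ W) := by
      have hedin : ∀ f ∈ H'.edges, f ⊆ H'.verts \ (S ∩ W) → f ⊆ P ∨ f ⊆ Q := by
        intro f hf hfsub
        have hfe : f ≠ e := by
          rintro rfl
          have h := Finset.mem_sdiff.mp (hfsub hze)
          exact h.2 (Finset.mem_inter.mpr ⟨hzS, h.1⟩)
        apply hPorQ f (FinHypergraph.mem_of_mem_addEdge (hsub.2 hf) hfe)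
        intro y hy hyS
        have h := Finset.mem_sdiff.mp (hfsub hy)
        exact h.2 (Finset.mem_inter.mpr ⟨hyS, h.1⟩)
      have hp' : p ∈ H'.verts \ (S ∩ W) := Finset.mem_sdiff.mpr ⟨heW hpe,
          fun h => hPnS p hpP (Finset.mem_inter.mp h).1⟩
      have hq' : q ∈ H'.verts \ (S ∩ W) := Finset.mem_sdiff.mpr ⟨heW hqe,
          fun h => hSQ q (Finset.mem_inter.mp h).1 hqQ⟩
      exact ⟨Finset.inter_subset_right,
        FinHypergraph.not_connected_of_sep H' _ P Q hPQ hedin p q hp' hpP hq' hqQ⟩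
    have h1 := FinHypergraph.kappa_le_of_cut H' _ hcutZ
    have h2 : (S ∩ W).card ≤ S.card := Finset.card_le_card Finset.inter_subset_left
    omega
  -- identify the vertex sets of H1 and H2
  have hH1v : H1.verts = S ∪ P := by
    rw [hH1]
    show V ∩ (S ∪ P) = S ∪ P
    exact Finset.inter_eq_right.mpr (Finset.union_subset hSV hPV)
  have hH2v : H2.verts = S ∪ Q := by
    rw [hH2]
    show V ∩ (S ∪ Q) = S ∪ Q
    exact Finset.inter_eq_right.mpr (Finset.union_subset hSV hQV)
  have hdisjSP : Disjoint S P := Finset.disjoint_left.mpr (fun {x} h1 h2 => hSP x h1 h2)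
  have hdisjSQ : Disjoint S Q := Finset.disjoint_left.mpr (fun {x} h1 h2 => hSQ x h1 h2)
  have hdisjPQ : Disjoint P Q := Finset.disjoint_left.mpr (fun {x} h1 h2 => hPQ x h1 h2)
  have hH1S : H1.verts \ S = P := by rw [hH1v]; exact Finset.union_sdiff_cancel_left hdisjSP
  have hH2S : H2.verts \ S = Q := by rw [hH2v]; exact Finset.union_sdiff_cancel_left hdisjSQ
  -- cardinalities
  have hcSP : (S ∪ P).card = S.card + P.card := Finset.card_union_of_disjoint hdisjSP
  have hcSQ : (S ∪ Q).card = S.card + Q.card := Finset.card_union_of_disjoint hdisjSQ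
  have hcPQ : (P ∪ Q).card = P.card + Q.card := Finset.card_union_of_disjoint hdisjPQ
  have hcV : V.card = S.card + P.card + Q.card := by
    have h1 : (V \ S).card + S.card = V.card := Finset.card_sdiff_add_card_eq_card hSV
    have h2 : P ∪ Q = V \ S := by
      ext x
      constructor
      · intro hx
        rcases Finset.mem_union.mp hx with h|h
        · exact hPVS h
        · exact Finset.mem_sdiff.mpr ⟨hQV h, fun hs => hSQ x hs h⟩
      · intro hx
        rcases hcover x (Finset.mem_sdiff.mp hx).1 with h|h|h
        · exact absurd h (Finset.mem_sdiff.mp hx).2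
        · exact Finset.mem_union_left _ h
        · exact Finset.mem_union_right _ h
    rw [← h2] at h1
    omega
  have hS : S.card = k := le_antisymm hsk hks
  -- rewrite the filter
  rw [hH1S, hH2S]
  have hfilter : H.edges.filter
        (fun e => (e ∩ P).Nonempty ∧ (e ∩ S).Nonempty ∧ (e ∩ Q).Nonempty)
      = (V.powersetCard r).filter
        (fun e => (e ∩ P).Nonempty ∧ (e ∩ S).Nonempty ∧ (e ∩ Q).Nonempty) := by
    ext e
    simp only [Finset.mem_filter, Finset.mem_powersetCard]
    constructor
    · rintro ⟨he, hc⟩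
      exact ⟨⟨H.edge_sub e he, hunif e he⟩, hc⟩
    · rintro ⟨⟨heV, hec⟩, hc⟩
      exact ⟨hcross e heV hec hc.1 hc.2.1 hc.2.2, hc⟩
  rw [hfilter]
  have hcount := count_crossing V S P Q r (by omega) hSP hSQ hPQ
    (fun x => ⟨fun h => hcover x h, fun h => by
      rcases h with h|h|h
      · exact hSV h
      · exact hPV h
      · exact hQV h⟩)
  rw [hcount, hcard, hcSP, hcSQ, hcPQ, hS]
  have e1 : n1 = k + P.card := by rw [← hn1, hH1v, hcSP, hS]
  have e2 : n2 = k + Q.card := by rw [← hn2, hH2v, hcSQ, hS]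
  have e3 : n = k + P.card + Q.card := by rw [← hcard, hcV, hS]
  have e4 : n1 - k = P.card := by omega
  have e5 : n2 - k = Q.card := by omega
  have e6 : n - k = P.card + Q.card := by omega
  rw [e4, e5, e6, e1, e2]
  push_cast
  ring
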